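/- arXiv:1605.05051 — 7 statements merged into one kernel-verified Lean document; each statement's English description precedes it below -/
import Mathlib

section
/- For all nonnegative reals a and b, 0 ≤ √((a+b)/2) − (√a + √b)/2 ≤ ((√2 − 1)/2)·|√a − √b|. -/
theorem stmt0 (a b : ℝ) (ha : 0 ≤ a) (hb : 0 ≤ b) :
    0 ≤ Real.sqrt ((a + b) / 2) - (Real.sqrt a + Real.sqrt b) / 2 ∧
    Real.sqrt ((a + b) / 2) - (Real.sqrt a + Real.sqrt b) / 2
      ≤ ((Real.sqrt 2 - 1) / 2) * |Real.sqrt a - Real.sqrt b| := by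
  set x := Real.sqrt a with hx
  set y := Real.sqrt b with hy
  set u := Real.sqrt ((a + b) / 2) with hu
  set t := Real.sqrt 2 with ht
  have hx0 : 0 ≤ x := Real.sqrt_nonneg a
  have hy0 : 0 ≤ y := Real.sqrt_nonneg b
  have hu0 : 0 ≤ u := Real.sqrt_nonneg _
  have ht0 : 0 ≤ t := Real.sqrt_nonneg 2
  have hx2 : x ^ 2 = a := Real.sq_sqrt ha
  have hy2 : y ^ 2 = b := Real.sq_sqrt hb
  have hu2 : u ^ 2 = (a + b) / 2 := Real.sq_sqrt (by linarith)
  have ht2 : t ^ 2 = 2 := Real.sq_sqrt (by norm_num)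
  have ht1 : 1 ≤ t := by nlinarith
  have hlow : (x + y) / 2 ≤ u := by nlinarith [sq_nonneg (x - y), sq_nonneg (u + (x+y)/2)]
  refine ⟨by linarith, ?_⟩
  have main : ∀ p q : ℝ, 0 ≤ p → 0 ≤ q → q ≤ p → u ^ 2 = (p ^ 2 + q ^ 2) / 2 →
      u - (p + q) / 2 ≤ ((t - 1) / 2) * (p - q) := by
    intro p q hp hq hqp hu2'
    have hr0 : 0 ≤ (p + q) / 2 + ((t - 1) / 2) * (p - q) := by
      have : 0 ≤ ((t - 1) / 2) * (p - q) := by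
        apply mul_nonneg <;> linarith
      linarith
    have hz : (t ^ 2 - 2) * (p - q) ^ 2 = 0 := by rw [ht2]; ring
    have hsq : u ^ 2 ≤ ((p + q) / 2 + ((t - 1) / 2) * (p - q)) ^ 2 := by
      nlinarith [hz, mul_nonneg (mul_nonneg (by linarith : (0:ℝ) ≤ t - 1) (by linarith : (0:ℝ) ≤ p - q)) hq]
    have hur : u ≤ (p + q) / 2 + ((t - 1) / 2) * (p - q) := by
      calc u = Real.sqrt (u ^ 2) := (Real.sqrt_sq hu0).symm
        _ ≤ Real.sqrt (((p + q) / 2 + ((t - 1) / 2) * (p - q)) ^ 2) := Real.sqrt_le_sqrt hsq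
        _ = _ := Real.sqrt_sq hr0
    linarith
  rcases le_total x y with h | h
  · rw [abs_of_nonpos (by linarith)]
    have := main y x hy0 hx0 h (by rw [hx2, hy2]; linarith)
    linarith
  · rw [abs_of_nonneg (by linarith)]
    have := main x y hx0 hy0 h (by rw [hx2, hy2]; linarith)
    linarith
end

section
/- The function u ↦ ψ₂(√u) = (√u − 1)/(√u + 1) is strictly concave on (0,∞). -/
open Real Set

lemma aux_deriv (x : ℝ) (hx : -1 < x) :
    HasDerivAt (fun y : ℝ => (y - 1) / (y + 1)) (2 / (x + 1) ^ 2) x := by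
  have h1 : HasDerivAt (fun y : ℝ => y - 1) 1 x := (hasDerivAt_id x).sub_const 1
  have h2 : HasDerivAt (fun y : ℝ => y + 1) 1 x := (hasDerivAt_id x).add_const 1
  have hne : x + 1 ≠ 0 := by linarith
  have : HasDerivAt (fun y : ℝ => (y - 1) / (y + 1)) ((1 * (x + 1) - (x - 1) * 1) / (x + 1) ^ 2) x :=
    h1.div h2 hne
  convert this using 1
  field_simp
  ring

lemma aux_concave : StrictConcaveOn ℝ (Set.Ici (0:ℝ)) (fun y : ℝ => (y - 1) / (y + 1)) := by
  apply strictConcaveOn_of_deriv2_neg (convex_Ici 0)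
  · apply ContinuousOn.div
    · fun_prop
    · fun_prop
    · intro x hx
      simp only [mem_Ici] at hx
      intro h; linarith
  · intro x hx
    rw [interior_Ici] at hx
    simp only [mem_Ioi] at hx
    have hev : deriv (fun y : ℝ => (y - 1) / (y + 1)) =ᶠ[nhds x]
        (fun y : ℝ => 2 / (y + 1) ^ 2) := by
      filter_upwards [eventually_gt_nhds (show (-1:ℝ) < x by linarith)] with y hy
      exact (aux_deriv y hy).deriv
    have h2 : HasDerivAt (fun y : ℝ => 2 / (y + 1) ^ 2) (-4 / (x + 1) ^ 3) x := by
      have h2' : HasDerivAt (fun y : ℝ => (y + 1) ^ 2) (2 * (x + 1)) x := by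
        have : HasDerivAt (fun y : ℝ => (y + 1) ^ 2) ((2 : ℕ) * (id x + 1) ^ (2 - 1) * 1) x :=
          ((hasDerivAt_id x).add_const 1).pow 2
        convert this using 1; simp [id]
      have hne : (x + 1) ^ 2 ≠ 0 := by positivity
      have : HasDerivAt (fun y : ℝ => 2 / (y + 1) ^ 2)
          ((0 * (x + 1) ^ 2 - 2 * (2 * (x + 1))) / ((x + 1) ^ 2) ^ 2) x :=
        (hasDerivAt_const x (2:ℝ)).div h2' hne
      convert this using 1
      field_simp
      ring
    have : deriv^[2] (fun y : ℝ => (y - 1) / (y + 1)) x = -4 / (x + 1) ^ 3 := by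
      simp only [Function.iterate_succ, Function.iterate_zero, Function.comp_apply, id]
      rw [hev.deriv_eq]
      exact h2.deriv
    rw [this]
    have : (0:ℝ) < (x + 1) ^ 3 := by positivity
    exact div_neg_of_neg_of_pos (by norm_num) this

lemma aux_mono : StrictMonoOn (fun y : ℝ => (y - 1) / (y + 1)) (Set.Ici (0:ℝ)) := by
  intro x hx y hy hxy
  simp only [mem_Ici] at hx hy
  rw [div_lt_div_iff₀ (by linarith) (by linarith)]
  nlinarith

lemma aux_image : Real.sqrt '' (Set.Ioi 0) = Set.Ioi (0:ℝ) := by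
  ext y
  constructor
  · rintro ⟨x, hx, rfl⟩
    exact Real.sqrt_pos.2 hx
  · intro hy
    exact ⟨y ^ 2, Set.mem_Ioi.mpr (pow_pos hy 2), by rw [Real.sqrt_sq (le_of_lt hy)]⟩

theorem stmt4 :
    StrictConcaveOn ℝ (Set.Ioi (0 : ℝ))
      (fun u => (Real.sqrt u - 1) / (Real.sqrt u + 1)) := by
  have hsqrt : StrictConcaveOn ℝ (Set.Ioi (0:ℝ)) Real.sqrt :=
    Real.strictConcaveOn_sqrt.subset (Set.Ioi_subset_Ici le_rfl) (convex_Ioi 0)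
  have hg : StrictConcaveOn ℝ (Real.sqrt '' (Set.Ioi 0))
      (fun y : ℝ => (y - 1) / (y + 1)) := by
    rw [aux_image]
    exact aux_concave.subset (Set.Ioi_subset_Ici le_rfl) (convex_Ioi 0)
  have hmono : StrictMonoOn (fun y : ℝ => (y - 1) / (y + 1)) (Real.sqrt '' (Set.Ioi 0)) := by
    rw [aux_image]
    exact aux_mono.mono (Set.Ioi_subset_Ici le_rfl)
  have hinj : Set.InjOn Real.sqrt (Set.Ioi 0) := fun a ha b hb h =>
    (Real.sqrt_inj (le_of_lt ha) (le_of_lt hb)).1 h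
  exact hg.comp hsqrt hmono hinj
end

section
/- Let R and Q be probability measures on a measurable space, with Q = q·μ absolutely continuous with respect to μ. Decompose R = δ²·R' + (1−δ²)·R'' where R' ≪ μ, R'' ⊥ μ, and δ ∈ [0,1]. Then the Hellinger affinity satisfies ρ(R,Q) = δ·ρ(R',Q), and consequently δ·h²(R',Q) = δ − (1 − h²(R,Q)) ≥ 0. -/
open MeasureTheory
open scoped ENNReal

/-- The squared Hellinger distance between two finite measures. -/
noncomputable def hellingerSq {α : Type*} [MeasurableSpace α] (P Q : Measure α) : ℝ :=
  (1 / 2) * ∫ x, (Real.sqrt ((P.rnDeriv (P + Q)) x).toReal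
      - Real.sqrt ((Q.rnDeriv (P + Q)) x).toReal) ^ 2 ∂(P + Q)

/-- The Hellinger affinity between two finite measures. -/
noncomputable def hellAff {α : Type*} [MeasurableSpace α] (P Q : Measure α) : ℝ :=
  ∫ x, Real.sqrt (((P.rnDeriv (P + Q)) x).toReal * ((Q.rnDeriv (P + Q)) x).toReal) ∂(P + Q)

namespace HellAux

variable {α : Type*} [MeasurableSpace α]

/-- Hellinger affinity computed with respect to a dominating measure `ν`, in `ℝ≥0∞`. -/
noncomputable def aff (P Q ν : Measure α) : ℝ≥0∞ :=
  ∫⁻ x, (P.rnDeriv ν x * Q.rnDeriv ν x) ^ (1/2 : ℝ) ∂ν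

lemma mul_self_rpow_half (x : ℝ≥0∞) : (x * x) ^ (1/2 : ℝ) = x := by
  rw [← sq, ← ENNReal.rpow_natCast x 2, ← ENNReal.rpow_mul]
  norm_num

lemma rpow_half_le_add (a b : ℝ≥0∞) : (a * b) ^ (1/2 : ℝ) ≤ a + b := by
  calc (a * b) ^ (1/2 : ℝ) ≤ ((a + b) * (a + b)) ^ (1/2 : ℝ) := by
        refine ENNReal.rpow_le_rpow ?_ (by norm_num)
        exact mul_le_mul' (self_le_add_right a b) (self_le_add_left b a)
    _ = a + b := mul_self_rpow_half _

lemma aff_ne_top (P Q ν : Measure α) [IsFiniteMeasure P] [IsFiniteMeasure Q] :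
    aff P Q ν ≠ ∞ := by
  refine ne_top_of_le_ne_top ?_ (lintegral_mono fun x => rpow_half_le_add _ _)
  rw [lintegral_add_left (Measure.measurable_rnDeriv _ _)]
  exact (ENNReal.add_lt_top.mpr
    ⟨Measure.lintegral_rnDeriv_lt_top _ _, Measure.lintegral_rnDeriv_lt_top _ _⟩).ne

lemma hellAff_eq_toReal_aff (P Q : Measure α) [IsFiniteMeasure P] [IsFiniteMeasure Q] :
    hellAff P Q = (aff P Q (P + Q)).toReal := by
  rw [hellAff, aff, ← integral_toReal]
  · refine integral_congr_ae ?_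
    filter_upwards [Measure.rnDeriv_lt_top P (P + Q), Measure.rnDeriv_lt_top Q (P + Q)]
      with x hp hq
    rw [← ENNReal.toReal_rpow, ENNReal.toReal_mul, Real.sqrt_eq_rpow]
  · exact ((Measure.measurable_rnDeriv _ _).mul
      (Measure.measurable_rnDeriv _ _)).pow_const _ |>.aemeasurable
  · filter_upwards [Measure.rnDeriv_lt_top P (P + Q), Measure.rnDeriv_lt_top Q (P + Q)]
      with x hp hq
    exact ENNReal.rpow_lt_top_of_nonneg (by norm_num) (ENNReal.mul_ne_top hp.ne hq.ne)

lemma aff_invariant (P Q ν : Measure α) [IsFiniteMeasure P] [IsFiniteMeasure Q]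
    [SigmaFinite ν] (hP : P ≪ ν) (hQ : Q ≪ ν) :
    aff P Q (P + Q) = aff P Q ν := by
  have hPQ : P + Q ≪ ν := hP.add_left hQ
  have hPPQ : P ≪ P + Q := Measure.absolutelyContinuous_of_le (Measure.le_add_right le_rfl)
  have hQPQ : Q ≪ P + Q := Measure.absolutelyContinuous_of_le (Measure.le_add_left le_rfl)
  rw [aff, aff, ← lintegral_rnDeriv_mul hPQ
    (show Measurable (fun x => (P.rnDeriv (P + Q) x * Q.rnDeriv (P + Q) x) ^ (1/2 : ℝ)) from
    ((Measure.measurable_rnDeriv _ _).mul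
      (Measure.measurable_rnDeriv _ _)).pow_const _).aemeasurable]
  refine lintegral_congr_ae ?_
  filter_upwards [Measure.rnDeriv_mul_rnDeriv (κ := ν) hPPQ,
    Measure.rnDeriv_mul_rnDeriv (κ := ν) hQPQ] with x hp hq
  simp only [Pi.mul_apply] at hp hq
  rw [← hp, ← hq]
  set w := (P + Q).rnDeriv ν x
  set a := P.rnDeriv (P + Q) x
  set b := Q.rnDeriv (P + Q) x
  rw [show a * w * (b * w) = (w * w) * (a * b) by ring,
    ENNReal.mul_rpow_of_nonneg (w * w) (a * b) (by norm_num : (0:ℝ) ≤ 1/2),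
    mul_self_rpow_half]

lemma hellAff_eq_aff (P Q ν : Measure α) [IsFiniteMeasure P] [IsFiniteMeasure Q]
    [SigmaFinite ν] (hP : P ≪ ν) (hQ : Q ≪ ν) :
    hellAff P Q = (aff P Q ν).toReal := by
  rw [hellAff_eq_toReal_aff, aff_invariant P Q ν hP hQ]

lemma hellingerSq_eq_one_sub (P Q : Measure α)
    [IsProbabilityMeasure P] [IsProbabilityMeasure Q] :
    hellingerSq P Q = 1 - hellAff P Q := by
  set p : α → ℝ := fun x => (P.rnDeriv (P + Q) x).toReal with hp_def
  set q : α → ℝ := fun x => (Q.rnDeriv (P + Q) x).toReal with hq_def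
  have hp : Integrable p (P + Q) := Measure.integrable_toReal_rnDeriv
  have hq : Integrable q (P + Q) := Measure.integrable_toReal_rnDeriv
  have hpm : Measurable fun x => Real.sqrt (p x * q x) :=
    (Real.continuous_sqrt.measurable).comp
      (((Measure.measurable_rnDeriv _ _).ennreal_toReal).mul
        ((Measure.measurable_rnDeriv _ _).ennreal_toReal))
  have hpq : Integrable (fun x => p x + q x) (P + Q) := hp.add hq
  have hint : Integrable (fun x => Real.sqrt (p x * q x)) (P + Q) := by
    refine hpq.mono hpm.aestronglyMeasurable (ae_of_all _ fun x => ?_)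
    have h0p : 0 ≤ p x := ENNReal.toReal_nonneg
    have h0q : 0 ≤ q x := ENNReal.toReal_nonneg
    rw [Real.norm_eq_abs, Real.norm_eq_abs, abs_of_nonneg (Real.sqrt_nonneg _),
      abs_of_nonneg (add_nonneg h0p h0q)]
    calc Real.sqrt (p x * q x) ≤ Real.sqrt ((p x + q x) ^ 2) := by
          refine Real.sqrt_le_sqrt ?_
          nlinarith
      _ = p x + q x := Real.sqrt_sq (add_nonneg h0p h0q)
  have hsq : ∀ x, (Real.sqrt (p x) - Real.sqrt (q x)) ^ 2
      = p x + q x - 2 * Real.sqrt (p x * q x) := by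
    intro x
    rw [sub_sq, Real.sq_sqrt ENNReal.toReal_nonneg, Real.sq_sqrt ENNReal.toReal_nonneg,
      Real.sqrt_mul ENNReal.toReal_nonneg]
    ring
  have h1 : ∫ x, p x ∂(P + Q) = 1 := by
    rw [hp_def, Measure.integral_toReal_rnDeriv
      (Measure.absolutelyContinuous_of_le (Measure.le_add_right le_rfl))]
    simp
  have h2 : ∫ x, q x ∂(P + Q) = 1 := by
    rw [hq_def, Measure.integral_toReal_rnDeriv
      (Measure.absolutelyContinuous_of_le (Measure.le_add_left le_rfl))]
    simp
  have : hellingerSq P Q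
      = (1/2) * ∫ x, (p x + q x - 2 * Real.sqrt (p x * q x)) ∂(P + Q) := by
    rw [hellingerSq]
    congr 1
    exact integral_congr_ae (ae_of_all _ hsq)
  rw [this, integral_sub hpq (hint.const_mul 2), integral_add hp hq,
    integral_const_mul, h1, h2, hellAff]
  ring

lemma hellingerSq_nonneg (P Q : Measure α) : 0 ≤ hellingerSq P Q :=
  mul_nonneg (by norm_num) (integral_nonneg fun x => sq_nonneg _)

end HellAux

theorem stmt7 {α : Type*} [MeasurableSpace α] (μ : Measure α) [SigmaFinite μ]
    (q : α → ℝ≥0∞) (hq : Measurable q) [IsProbabilityMeasure (μ.withDensity q)]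
    (R' R'' : Measure α) [IsProbabilityMeasure R'] [IsProbabilityMeasure R'']
    (hac : R' ≪ μ) (hsing : R''.MutuallySingular μ)
    (δ : ℝ) (hδ0 : 0 ≤ δ) (hδ1 : δ ≤ 1) :
    hellAff (ENNReal.ofReal (δ ^ 2) • R' + ENNReal.ofReal (1 - δ ^ 2) • R'') (μ.withDensity q)
        = δ * hellAff R' (μ.withDensity q) ∧
    δ * hellingerSq R' (μ.withDensity q)
        = δ - (1 - hellingerSq (ENNReal.ofReal (δ ^ 2) • R' + ENNReal.ofReal (1 - δ ^ 2) • R'')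
            (μ.withDensity q)) ∧
    0 ≤ δ - (1 - hellingerSq (ENNReal.ofReal (δ ^ 2) • R' + ENNReal.ofReal (1 - δ ^ 2) • R'')
            (μ.withDensity q)) := by
  classical
  have hδsq1 : δ ^ 2 ≤ 1 := by nlinarith
  set Q : Measure α := μ.withDensity q with hQ_def
  set c₁ : ℝ≥0∞ := ENNReal.ofReal (δ ^ 2) with hc₁
  set c₂ : ℝ≥0∞ := ENNReal.ofReal (1 - δ ^ 2) with hc₂
  have hc₁_ne_top : c₁ ≠ ∞ := ENNReal.ofReal_ne_top
  have hc₂_ne_top : c₂ ≠ ∞ := ENNReal.ofReal_ne_top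
  set R : Measure α := c₁ • R' + c₂ • R'' with hR_def
  haveI hR'fin : IsFiniteMeasure (c₁ • R') :=
    ⟨by rw [Measure.smul_apply, smul_eq_mul, measure_univ, mul_one]; exact hc₁_ne_top.lt_top⟩
  haveI hR''fin : IsFiniteMeasure (c₂ • R'') :=
    ⟨by rw [Measure.smul_apply, smul_eq_mul, measure_univ, mul_one]; exact hc₂_ne_top.lt_top⟩
  haveI hRprob : IsProbabilityMeasure R := by
    constructor
    rw [hR_def, Measure.add_apply, Measure.smul_apply, Measure.smul_apply,
      measure_univ, measure_univ, smul_eq_mul, smul_eq_mul, mul_one, mul_one,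
      hc₁, hc₂, ← ENNReal.ofReal_add (by positivity) (by linarith)]
    norm_num
  have hQμ : Q ≪ μ := withDensity_absolutelyContinuous μ q
  set ν : Measure α := R' + R'' + Q with hν_def
  haveI : IsFiniteMeasure ν := by
    constructor
    rw [hν_def]
    simp [measure_univ]
  have hR'ν : R' ≪ ν :=
    Measure.absolutelyContinuous_of_le
      ((Measure.le_add_right le_rfl).trans (Measure.le_add_right le_rfl))
  have hR''ν : R'' ≪ ν :=
    Measure.absolutelyContinuous_of_le
      ((Measure.le_add_left le_rfl).trans (Measure.le_add_right le_rfl))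
  have hQν : Q ≪ ν := Measure.absolutelyContinuous_of_le (Measure.le_add_left le_rfl)
  have hRν : R ≪ ν := (hR'ν.smul_left c₁).add_left (hR''ν.smul_left c₂)
  obtain ⟨s, hs, hR''s, hμsc⟩ := hsing
  have hQsc : Q sᶜ = 0 := hQμ hμsc
  -- the rnDeriv of R decomposes
  have hadd : R.rnDeriv ν =ᵐ[ν]
      fun x => c₁ * R'.rnDeriv ν x + c₂ * R''.rnDeriv ν x := by
    filter_upwards [Measure.rnDeriv_add' (c₁ • R') (c₂ • R'') ν,
      Measure.rnDeriv_smul_left_of_ne_top R' ν hc₁_ne_top,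
      Measure.rnDeriv_smul_left_of_ne_top R'' ν hc₂_ne_top] with x h1 h2 h3
    rw [hR_def, h1, Pi.add_apply, h2, h3]
    simp [mul_comm]
  -- rnDeriv of R'' vanishes a.e. on s
  have hR''zero : ∀ᵐ x ∂ν, x ∈ s → R''.rnDeriv ν x = 0 := by
    have hle : ∫⁻ x in s, R''.rnDeriv ν x ∂ν = 0 :=
      le_antisymm ((Measure.setLIntegral_rnDeriv_le s).trans hR''s.le) zero_le
    rw [lintegral_eq_zero_iff (Measure.measurable_rnDeriv _ _)] at hle
    exact (ae_restrict_iff' hs).mp hle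
  -- rnDeriv of Q vanishes a.e. on sᶜ
  have hQzero : ∀ᵐ x ∂ν, x ∉ s → Q.rnDeriv ν x = 0 := by
    have hle : ∫⁻ x in sᶜ, Q.rnDeriv ν x ∂ν = 0 :=
      le_antisymm ((Measure.setLIntegral_rnDeriv_le sᶜ).trans hQsc.le) zero_le
    rw [lintegral_eq_zero_iff (Measure.measurable_rnDeriv _ _)] at hle
    exact (ae_restrict_iff' hs.compl).mp hle
  have hc₁sqrt : c₁ ^ (1/2 : ℝ) = ENNReal.ofReal δ := by
    rw [hc₁, sq, ENNReal.ofReal_mul hδ0, HellAux.mul_self_rpow_half]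
  -- key identity in ℝ≥0∞
  have key : HellAux.aff R Q ν = ENNReal.ofReal δ * HellAux.aff R' Q ν := by
    rw [HellAux.aff, HellAux.aff, ← lintegral_const_mul _
      (show Measurable (fun x => (R'.rnDeriv ν x * Q.rnDeriv ν x) ^ (1/2 : ℝ)) from
      ((Measure.measurable_rnDeriv _ _).mul (Measure.measurable_rnDeriv _ _)).pow_const _)]
    refine lintegral_congr_ae ?_
    filter_upwards [hadd, hR''zero, hQzero] with x h1 h2 h3
    by_cases hxs : x ∈ s
    · rw [h1, h2 hxs, mul_zero, add_zero, mul_assoc,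
        ENNReal.mul_rpow_of_nonneg _ _ (by norm_num : (0:ℝ) ≤ 1/2), hc₁sqrt]
    · rw [h1, h3 hxs, mul_zero, mul_zero,
        ENNReal.zero_rpow_of_pos (by norm_num), mul_zero]
  have haff' : hellAff R' Q = (HellAux.aff R' Q ν).toReal :=
    HellAux.hellAff_eq_aff R' Q ν hR'ν hQν
  have haffR : hellAff R Q = (HellAux.aff R Q ν).toReal :=
    HellAux.hellAff_eq_aff R Q ν hRν hQν
  have part1 : hellAff R Q = δ * hellAff R' Q := by
    rw [haffR, key, ENNReal.toReal_mul, ENNReal.toReal_ofReal hδ0, haff']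
  have part2 : δ * hellingerSq R' Q = δ - (1 - hellingerSq R Q) := by
    rw [HellAux.hellingerSq_eq_one_sub R' Q, HellAux.hellingerSq_eq_one_sub R Q, part1]
    ring
  refine ⟨part1, part2, ?_⟩
  rw [← part2]
  exact mul_nonneg hδ0 (HellAux.hellingerSq_nonneg R' Q)
end

section
/- Let ψ : [0,∞] → [−1,1] satisfy ψ(1/x) = −ψ(x) for all x ∈ [0,∞) (with convention 1/0 = +∞), and suppose |ψ(x)| ≤ L|x−1| for all x ≥ 0 and some constant L > 0. Then for any probability measures R, Q = q·μ, Q' = q'·μ on a measurable space, ∫ ψ²(√(q'/q)) dR ≤ (2L+1)² [h²(R,Q) + h²(R,Q')]. -/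
open MeasureTheory
open scoped ENNReal

/-- `ratio q q' x` is `q' x / q x` with the conventions `0/0 = 1` and
`a/0 = +∞` for `a > 0` (the latter being the `ℝ≥0∞` division). -/
noncomputable def ratio {β : Type*} (q q' : β → ℝ≥0∞) (x : β) : ℝ≥0∞ :=
  if q x = 0 ∧ q' x = 0 then 1 else q' x / q x


set_option maxHeartbeats 1000000 in
lemma real_key  {L d a b t : ℝ} (hL : 0 < L) (hd : 0 ≤ d) (ha : 0 ≤ a) (hb : 0 ≤ b)
    (h1 : |t| ≤ 1)
    (h2 : 0 < a → 0 < b → |t| * a ≤ L * |b - a|)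
    (h3 : 0 < a → 0 < b → |t| * b ≤ L * |a - b|)
    (h4 : a = 0 → 0 < b → |t| ≤ L)
    (h5 : 0 < a → b = 0 → |t| ≤ L) :
    t ^ 2 * d ^ 2 ≤ (2 * L + 1) ^ 2 / 2 * ((d - a) ^ 2 + (d - b) ^ 2) := by
  have ht1 : t ^ 2 ≤ 1 := by nlinarith [sq_abs t, abs_nonneg t]
  rcases ha.eq_or_lt with ha0 | ha0
  · rcases hb.eq_or_lt with hb0 | hb0
    · subst ha0; subst hb0
      nlinarith [sq_nonneg d, sq_nonneg L, mul_le_mul_of_nonneg_right ht1 (sq_nonneg d)]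
    · have htL : t ^ 2 ≤ L ^ 2 := by
        have := h4 ha0.symm hb0
        nlinarith [sq_abs t, abs_nonneg t]
      subst ha0
      nlinarith [mul_le_mul_of_nonneg_right htL (sq_nonneg d), sq_nonneg (d - b), sq_nonneg d, hL]
  · rcases hb.eq_or_lt with hb0 | hb0
    · have htL : t ^ 2 ≤ L ^ 2 := by
        have := h5 ha0 hb0.symm
        nlinarith [sq_abs t, abs_nonneg t]
      subst hb0
      nlinarith [mul_le_mul_of_nonneg_right htL (sq_nonneg d), sq_nonneg (d - a), sq_nonneg d, hL]
    · by_cases hca : 2 * L * d ≤ (2 * L + 1) * a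
      · have k1 : |t| * (2 * L * d) ≤ (2 * L + 1) * (L * |b - a|) := by
          calc |t| * (2 * L * d) ≤ |t| * ((2 * L + 1) * a) :=
                mul_le_mul_of_nonneg_left hca (abs_nonneg t)
            _ = (2 * L + 1) * (|t| * a) := by ring
            _ ≤ (2 * L + 1) * (L * |b - a|) :=
                mul_le_mul_of_nonneg_left (h2 ha0 hb0) (by positivity)
        have k2 : (t * (2 * L * d)) ^ 2 ≤ ((2 * L + 1) * (L * (b - a))) ^ 2 := by
          have h := mul_self_le_mul_self (by positivity) k1
          have e1 : (t * (2 * L * d)) ^ 2 = (|t| * (2 * L * d)) * (|t| * (2 * L * d)) := by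
            rw [show |t| * (2 * L * d) * (|t| * (2 * L * d)) = |t| ^ 2 * (2 * L * d) ^ 2 by ring,
              sq_abs]; ring
          have e2 : ((2 * L + 1) * (L * (b - a))) ^ 2
              = ((2 * L + 1) * (L * |b - a|)) * ((2 * L + 1) * (L * |b - a|)) := by
            rw [show (2 * L + 1) * (L * |b - a|) * ((2 * L + 1) * (L * |b - a|))
                = (2 * L + 1) ^ 2 * L ^ 2 * |b - a| ^ 2 by ring, sq_abs]; ring
          rw [e1, e2]; exact h
        have k3 : 4 * L ^ 2 * (t ^ 2 * d ^ 2) ≤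
            4 * L ^ 2 * ((2 * L + 1) ^ 2 / 2 * ((d - a) ^ 2 + (d - b) ^ 2)) := by
          nlinarith [k2,
            mul_nonneg (mul_nonneg (sq_nonneg (2 * L + 1)) (sq_nonneg L)) (sq_nonneg (2 * d - a - b))]
        exact le_of_mul_le_mul_left k3 (by positivity)
      · by_cases hcb : 2 * L * d ≤ (2 * L + 1) * b
        · have k1 : |t| * (2 * L * d) ≤ (2 * L + 1) * (L * |a - b|) := by
            calc |t| * (2 * L * d) ≤ |t| * ((2 * L + 1) * b) :=
                  mul_le_mul_of_nonneg_left hcb (abs_nonneg t)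
              _ = (2 * L + 1) * (|t| * b) := by ring
              _ ≤ (2 * L + 1) * (L * |a - b|) :=
                  mul_le_mul_of_nonneg_left (h3 ha0 hb0) (by positivity)
          have k2 : (t * (2 * L * d)) ^ 2 ≤ ((2 * L + 1) * (L * (a - b))) ^ 2 := by
            have h := mul_self_le_mul_self (by positivity) k1
            have e1 : (t * (2 * L * d)) ^ 2 = (|t| * (2 * L * d)) * (|t| * (2 * L * d)) := by
              rw [show |t| * (2 * L * d) * (|t| * (2 * L * d)) = |t| ^ 2 * (2 * L * d) ^ 2 by ring, sq_abs]; ring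
            have e2 : ((2 * L + 1) * (L * (a - b))) ^ 2
                = ((2 * L + 1) * (L * |a - b|)) * ((2 * L + 1) * (L * |a - b|)) := by
              ring_nf; rw [sq_abs (a - b)]; ring
            rw [e1, e2]; exact h
          have k3 : 4 * L ^ 2 * (t ^ 2 * d ^ 2) ≤
              4 * L ^ 2 * ((2 * L + 1) ^ 2 / 2 * ((d - a) ^ 2 + (d - b) ^ 2)) := by
            nlinarith [k2,
              mul_nonneg (mul_nonneg (sq_nonneg (2 * L + 1)) (sq_nonneg L)) (sq_nonneg (2 * d - a - b))]
          exact le_of_mul_le_mul_left k3 (by positivity)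
        · push_neg at hca hcb
          have e1 : d ≤ (2 * L + 1) * (d - a) := by nlinarith
          have e2 : d ≤ (2 * L + 1) * (d - b) := by nlinarith
          have s1 : d ^ 2 ≤ ((2 * L + 1) * (d - a)) ^ 2 := pow_le_pow_left₀ hd e1 2
          have s2 : d ^ 2 ≤ ((2 * L + 1) * (d - b)) ^ 2 := pow_le_pow_left₀ hd e2 2
          nlinarith [mul_le_mul_of_nonneg_right ht1 (sq_nonneg d), s1, s2]

lemma pointwise_key {ψ : ℝ≥0∞ → ℝ} (hψb : ∀ x, |ψ x| ≤ 1)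
    (hanti : ∀ x : ℝ≥0∞, x ≠ ⊤ → ψ x⁻¹ = -ψ x) {L : ℝ} (hL : 0 < L)
    (hlip : ∀ x : ℝ≥0∞, x ≠ ⊤ → |ψ x| ≤ L * |x.toReal - 1|)
    (u v w C : ℝ≥0∞) (hu : u ≠ ⊤) (hv : v ≠ ⊤) (hw : w ≠ ⊤) :
    (ψ ((if u = 0 ∧ v = 0 then 1 else v / u) ^ (1 / 2 : ℝ))) ^ 2 * C.toReal
      ≤ (2 * L + 1) ^ 2 / 2 * ((Real.sqrt C.toReal - Real.sqrt (u * w).toReal) ^ 2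
          + (Real.sqrt C.toReal - Real.sqrt (v * w).toReal) ^ 2) := by
  have hψL0 : |ψ 0| ≤ L := by simpa using hlip 0 (by simp)
  by_cases huv : u = 0 ∧ v = 0
  · rw [if_pos huv, ENNReal.one_rpow]
    have hψ1 : ψ 1 = 0 := by
      have h := hanti 1 (by simp)
      rw [inv_one] at h; linarith
    rw [hψ1, show (0:ℝ) ^ 2 * C.toReal = 0 by ring]
    positivity
  · rw [if_neg huv]
    set s : ℝ≥0∞ := (v / u) ^ (1 / 2 : ℝ) with hs
    set d := Real.sqrt C.toReal with hddef
    set a := Real.sqrt (u * w).toReal with hadef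
    set b := Real.sqrt (v * w).toReal with hbdef
    have hann : (0:ℝ) ≤ a := Real.sqrt_nonneg _
    have hbnn : (0:ℝ) ≤ b := Real.sqrt_nonneg _
    have hmuw : u * w ≠ ⊤ := ENNReal.mul_ne_top hu hw
    have hmvw : v * w ≠ ⊤ := ENNReal.mul_ne_top hv hw
    have ha0 : a = 0 ↔ u = 0 ∨ w = 0 := by
      rw [hadef, Real.sqrt_eq_zero ENNReal.toReal_nonneg, ENNReal.toReal_eq_zero_iff,
        mul_eq_zero]
      simp [hmuw]
    have hb0 : b = 0 ↔ v = 0 ∨ w = 0 := by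
      rw [hbdef, Real.sqrt_eq_zero ENNReal.toReal_nonneg, ENNReal.toReal_eq_zero_iff,
        mul_eq_zero]
      simp [hmvw]
    have hd2 : C.toReal = d ^ 2 := (Real.sq_sqrt ENNReal.toReal_nonneg).symm
    have key : (ψ s) ^ 2 * d ^ 2 ≤ (2 * L + 1) ^ 2 / 2 * ((d - a) ^ 2 + (d - b) ^ 2) := by
      refine real_key hL (Real.sqrt_nonneg _) (Real.sqrt_nonneg _) (Real.sqrt_nonneg _)
        (hψb s) ?_ ?_ ?_ ?_
      · -- h2
        intro hap hbp
        have hu0 : u ≠ 0 := fun h => hap.ne' (ha0.mpr (Or.inl h))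
        have hw0 : w ≠ 0 := fun h => hap.ne' (ha0.mpr (Or.inr h))
        have hv0 : v ≠ 0 := fun h => hbp.ne' (hb0.mpr (Or.inl h))
        have hvutop : v / u ≠ ⊤ := (ENNReal.div_lt_top hv hu0).ne
        have hstop : s ≠ ⊤ := by
          rw [hs]; exact (ENNReal.rpow_lt_top_of_nonneg (by norm_num) hvutop).ne
        have hsr : s.toReal = Real.sqrt (v.toReal / u.toReal) := by
          rw [hs, ← ENNReal.toReal_rpow, ENNReal.toReal_div, Real.sqrt_eq_rpow]
        have hur : 0 < u.toReal := ENNReal.toReal_pos hu0 hu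
        have hab : s.toReal * a = b := by
          rw [hsr, hadef, hbdef, ENNReal.toReal_mul, ENNReal.toReal_mul,
            ← Real.sqrt_mul (by positivity)]
          congr 1
          field_simp
        calc |ψ s| * a ≤ (L * |s.toReal - 1|) * a :=
              mul_le_mul_of_nonneg_right (hlip s hstop) (Real.sqrt_nonneg _)
          _ = L * |b - a| := by
              rw [mul_assoc]
              congr 1
              rw [show |s.toReal - 1| * a = |(s.toReal - 1) * a| from by
                  rw [abs_mul, abs_of_nonneg hann],
                sub_mul, one_mul, hab]
      · -- h3
        intro hap hbp
        have hu0 : u ≠ 0 := fun h => hap.ne' (ha0.mpr (Or.inl h))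
        have hw0 : w ≠ 0 := fun h => hap.ne' (ha0.mpr (Or.inr h))
        have hv0 : v ≠ 0 := fun h => hbp.ne' (hb0.mpr (Or.inl h))
        have hvutop : v / u ≠ ⊤ := (ENNReal.div_lt_top hv hu0).ne
        have hvu0 : v / u ≠ 0 := by simp [ENNReal.div_eq_zero_iff, hv0, hu]
        have hstop : s ≠ ⊤ := by
          rw [hs]; exact (ENNReal.rpow_lt_top_of_nonneg (by norm_num) hvutop).ne
        have hs0 : s ≠ 0 := by
          rw [hs]
          exact (ENNReal.rpow_pos (lt_of_le_of_ne zero_le (Ne.symm hvu0)) hvutop).ne'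
        have hsr : s.toReal = Real.sqrt (v.toReal / u.toReal) := by
          rw [hs, ← ENNReal.toReal_rpow, ENNReal.toReal_div, Real.sqrt_eq_rpow]
        have hur : 0 < u.toReal := ENNReal.toReal_pos hu0 hu
        have hab : s.toReal * a = b := by
          rw [hsr, hadef, hbdef, ENNReal.toReal_mul, ENNReal.toReal_mul,
            ← Real.sqrt_mul (by positivity)]
          congr 1
          field_simp
        have hstr0 : 0 < s.toReal := ENNReal.toReal_pos hs0 hstop
        have hba : (s.toReal)⁻¹ * b = a := by
          rw [← hab]; field_simp
        have hsinvtop : s⁻¹ ≠ ⊤ := by simp [hs0]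
        have hpsi : |ψ s| = |ψ s⁻¹| := by rw [hanti s hstop, abs_neg]
        calc |ψ s| * b = |ψ s⁻¹| * b := by rw [hpsi]
          _ ≤ (L * |(s⁻¹).toReal - 1|) * b :=
              mul_le_mul_of_nonneg_right (hlip s⁻¹ hsinvtop) (Real.sqrt_nonneg _)
          _ = L * |a - b| := by
              rw [mul_assoc]
              congr 1
              rw [show |s⁻¹.toReal - 1| * b = |(s⁻¹.toReal - 1) * b| from by
                  rw [abs_mul, abs_of_nonneg hbnn],
                sub_mul, one_mul, ENNReal.toReal_inv, hba]
      · -- h4 : a = 0 → 0 < b → |ψ s| ≤ L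
        intro haz hbp
        have hw0 : w ≠ 0 := fun h => hbp.ne' (hb0.mpr (Or.inr h))
        have hv0 : v ≠ 0 := fun h => hbp.ne' (hb0.mpr (Or.inl h))
        have hu0 : u = 0 := by
          rcases ha0.mp haz with h | h
          · exact h
          · exact absurd h hw0
        have hdiv : v / u = ⊤ := by rw [hu0]; exact ENNReal.div_zero hv0
        have hstop : s = ⊤ := by rw [hs, hdiv]; exact ENNReal.top_rpow_of_pos (by norm_num)
        rw [hstop, ← ENNReal.inv_zero, hanti 0 (by simp), abs_neg]
        exact hψL0
      · -- h5 : 0 < a → b = 0 → |ψ s| ≤ L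
        intro hap hbz
        have hu0 : u ≠ 0 := fun h => hap.ne' (ha0.mpr (Or.inl h))
        have hw0 : w ≠ 0 := fun h => hap.ne' (ha0.mpr (Or.inr h))
        have hv0 : v = 0 := by
          rcases hb0.mp hbz with h | h
          · exact h
          · exact absurd h hw0
        have hdiv : v / u = 0 := by rw [hv0]; exact ENNReal.zero_div
        have hs0 : s = 0 := by rw [hs, hdiv]; exact ENNReal.zero_rpow_of_pos (by norm_num)
        rw [hs0]
        exact hψL0
    rw [hd2]
    exact key


lemma rnDeriv_zero_on_null {α : Type*} [MeasurableSpace α] {m ν : Measure α}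
    [m.HaveLebesgueDecomposition ν] (hm : m ≪ ν) {S : Set α} (hS : MeasurableSet S)
    (hmS : m S = 0) : ∀ᵐ x ∂ν, x ∈ S → m.rnDeriv ν x = 0 := by
  have h0 : ∫⁻ x in S, m.rnDeriv ν x ∂ν = 0 := by
    rw [Measure.setLIntegral_rnDeriv' hm hS, hmS]
  rw [lintegral_eq_zero_iff (Measure.measurable_rnDeriv m ν)] at h0
  exact (ae_restrict_iff' hS).mp h0

lemma hell_eq {α : Type*} [MeasurableSpace α] (P Q ν : Measure α)
    [IsFiniteMeasure P] [IsFiniteMeasure Q] [SigmaFinite ν]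
    (hP : P ≪ ν) (hQ : Q ≪ ν) :
    hellingerSq P Q = (1 / 2) * ∫ x, (Real.sqrt ((P.rnDeriv ν) x).toReal
      - Real.sqrt ((Q.rnDeriv ν) x).toReal) ^ 2 ∂ν := by
  set m := P + Q with hmdef
  have hm : m ≪ ν := fun s hs => by
    simp [hmdef, Measure.coe_add, Pi.add_apply, hP hs, hQ hs]
  have hPm : P ≪ m := Measure.absolutelyContinuous_of_le (Measure.le_add_right le_rfl)
  have hQm : Q ≪ m := Measure.absolutelyContinuous_of_le (Measure.le_add_left le_rfl)
  unfold hellingerSq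
  rw [← MeasureTheory.integral_rnDeriv_smul hm
    (f := fun x => (Real.sqrt ((P.rnDeriv m) x).toReal
      - Real.sqrt ((Q.rnDeriv m) x).toReal) ^ 2)]
  congr 1
  apply integral_congr_ae
  have h1 : P.rnDeriv m * m.rnDeriv ν =ᵐ[ν] P.rnDeriv ν := Measure.rnDeriv_mul_rnDeriv hPm
  have h2 : Q.rnDeriv m * m.rnDeriv ν =ᵐ[ν] Q.rnDeriv ν := Measure.rnDeriv_mul_rnDeriv hQm
  have h3 : ∀ᵐ x ∂ν, m.rnDeriv ν x ≠ ⊤ :=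
    (Measure.rnDeriv_lt_top m ν).mono fun x h => h.ne
  have h4 : ∀ᵐ x ∂ν, P.rnDeriv m x = ⊤ → m.rnDeriv ν x = 0 := by
    refine rnDeriv_zero_on_null hm
      (Measure.measurable_rnDeriv P m (measurableSet_singleton ⊤)) ?_
    have := Measure.rnDeriv_lt_top P m
    rw [ae_iff] at this
    convert this using 2
    congr 1
    ext x
    simp only [Set.mem_setOf_eq, not_lt, top_le_iff]
    exact Iff.rfl
  have h5 : ∀ᵐ x ∂ν, Q.rnDeriv m x = ⊤ → m.rnDeriv ν x = 0 := by
    refine rnDeriv_zero_on_null hm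
      (Measure.measurable_rnDeriv Q m (measurableSet_singleton ⊤)) ?_
    have := Measure.rnDeriv_lt_top Q m
    rw [ae_iff] at this
    convert this using 2
    congr 1
    ext x
    simp only [Set.mem_setOf_eq, not_lt, top_le_iff]
    exact Iff.rfl
  filter_upwards [h1, h2, h3, h4, h5] with x e1 e2 e3 e4 e5
  rw [← e1, ← e2]
  simp only [Pi.mul_apply]
  rcases eq_or_ne (m.rnDeriv ν x) 0 with hk | hk
  · simp [hk]
  · have hf : P.rnDeriv m x ≠ ⊤ := fun h => hk (e4 h)
    have hg : Q.rnDeriv m x ≠ ⊤ := fun h => hk (e5 h)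
    rw [ENNReal.toReal_mul, ENNReal.toReal_mul,
      Real.sqrt_mul ENNReal.toReal_nonneg, Real.sqrt_mul ENNReal.toReal_nonneg]
    have hkk : Real.sqrt (m.rnDeriv ν x).toReal ^ 2 = (m.rnDeriv ν x).toReal :=
      Real.sq_sqrt ENNReal.toReal_nonneg
    rw [smul_eq_mul]
    linear_combination (-(Real.sqrt (P.rnDeriv m x).toReal
      - Real.sqrt (Q.rnDeriv m x).toReal) ^ 2) * hkk


theorem stmt8 {α : Type*} [MeasurableSpace α] (μ : Measure α) [SigmaFinite μ]
    (R : Measure α) [IsProbabilityMeasure R]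
    (q q' : α → ℝ≥0∞) (hq : Measurable q) (hq' : Measurable q')
    (hqfin : ∀ x, q x ≠ ⊤) (hq'fin : ∀ x, q' x ≠ ⊤)
    [IsProbabilityMeasure (μ.withDensity q)] [IsProbabilityMeasure (μ.withDensity q')]
    (ψ : ℝ≥0∞ → ℝ) (hψm : Measurable ψ) (hψb : ∀ x, |ψ x| ≤ 1)
    (hanti : ∀ x : ℝ≥0∞, x ≠ ⊤ → ψ x⁻¹ = -ψ x)
    (L : ℝ) (hL : 0 < L)
    (hlip : ∀ x : ℝ≥0∞, x ≠ ⊤ → |ψ x| ≤ L * |x.toReal - 1|) :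
    ∫ x, (ψ ((ratio q q' x) ^ (1 / 2 : ℝ))) ^ 2 ∂(R)
      ≤ (2 * L + 1) ^ 2 *
        (hellingerSq R (μ.withDensity q) + hellingerSq R (μ.withDensity q')) := by
  classical
  set ν : Measure α := R + μ with hνdef
  have hRν : R ≪ ν := Measure.absolutelyContinuous_of_le (Measure.le_add_right le_rfl)
  have hμν : μ ≪ ν := Measure.absolutelyContinuous_of_le (Measure.le_add_left le_rfl)
  have hQν : μ.withDensity q ≪ ν := (withDensity_absolutelyContinuous μ q).trans hμν
  have hQ'ν : μ.withDensity q' ≪ ν := (withDensity_absolutelyContinuous μ q').trans hμν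
  have hA : (μ.withDensity q).rnDeriv ν =ᵐ[ν] fun x => q x * μ.rnDeriv ν x :=
    Measure.rnDeriv_withDensity_left hq.aemeasurable (ae_of_all _ hqfin)
  have hB : (μ.withDensity q').rnDeriv ν =ᵐ[ν] fun x => q' x * μ.rnDeriv ν x :=
    Measure.rnDeriv_withDensity_left hq'.aemeasurable (ae_of_all _ hq'fin)
  set F : α → ℝ := fun x => (ψ ((ratio q q' x) ^ (1 / 2 : ℝ))) ^ 2 with hFdef
  set G : α → ℝ := fun x => (Real.sqrt ((R.rnDeriv ν) x).toReal
      - Real.sqrt (((μ.withDensity q).rnDeriv ν) x).toReal) ^ 2 with hGdef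
  set G' : α → ℝ := fun x => (Real.sqrt ((R.rnDeriv ν) x).toReal
      - Real.sqrt (((μ.withDensity q').rnDeriv ν) x).toReal) ^ 2 with hG'def
  have hFmeas : Measurable F := by
    apply Measurable.pow_const
    apply hψm.comp
    have hrmeas : Measurable (ratio q q') := by
      refine Measurable.ite ?_ measurable_const (hq'.div hq)
      exact (hq (measurableSet_singleton 0)).inter (hq' (measurableSet_singleton 0))
    fun_prop
  have hFbd : ∀ x, 0 ≤ F x ∧ F x ≤ 1 := by
    intro x
    simp only [hFdef]
    constructor
    · positivity
    · have h := hψb ((ratio q q' x) ^ (1 / 2 : ℝ))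
      nlinarith [sq_abs (ψ ((ratio q q' x) ^ (1 / 2 : ℝ))),
        abs_nonneg (ψ ((ratio q q' x) ^ (1 / 2 : ℝ)))]
  have hGmeas : Measurable G := by
    apply Measurable.pow_const
    exact ((Measure.measurable_rnDeriv R ν).ennreal_toReal.sqrt).sub
      ((Measure.measurable_rnDeriv _ ν).ennreal_toReal.sqrt)
  have hG'meas : Measurable G' := by
    apply Measurable.pow_const
    exact ((Measure.measurable_rnDeriv R ν).ennreal_toReal.sqrt).sub
      ((Measure.measurable_rnDeriv _ ν).ennreal_toReal.sqrt)
  have hGint : Integrable G ν := by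
    refine Integrable.mono'
      (((Measure.integrable_toReal_rnDeriv (μ := R) (ν := ν)).add
        (Measure.integrable_toReal_rnDeriv (μ := μ.withDensity q) (ν := ν))).const_mul 2)
      hGmeas.aestronglyMeasurable (ae_of_all _ fun x => ?_)
    simp only [Real.norm_eq_abs, hGdef, Pi.add_apply]
    rw [abs_of_nonneg (by positivity)]
    nlinarith [Real.sq_sqrt (ENNReal.toReal_nonneg : (0:ℝ) ≤ ((R.rnDeriv ν) x).toReal),
      Real.sq_sqrt (ENNReal.toReal_nonneg : (0:ℝ) ≤ (((μ.withDensity q).rnDeriv ν) x).toReal),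
      sq_nonneg (Real.sqrt ((R.rnDeriv ν) x).toReal
        + Real.sqrt (((μ.withDensity q).rnDeriv ν) x).toReal)]
  have hG'int : Integrable G' ν := by
    refine Integrable.mono'
      (((Measure.integrable_toReal_rnDeriv (μ := R) (ν := ν)).add
        (Measure.integrable_toReal_rnDeriv (μ := μ.withDensity q') (ν := ν))).const_mul 2)
      hG'meas.aestronglyMeasurable (ae_of_all _ fun x => ?_)
    simp only [Real.norm_eq_abs, hG'def, Pi.add_apply]
    rw [abs_of_nonneg (by positivity)]
    nlinarith [Real.sq_sqrt (ENNReal.toReal_nonneg : (0:ℝ) ≤ ((R.rnDeriv ν) x).toReal),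
      Real.sq_sqrt (ENNReal.toReal_nonneg : (0:ℝ) ≤ (((μ.withDensity q').rnDeriv ν) x).toReal),
      sq_nonneg (Real.sqrt ((R.rnDeriv ν) x).toReal
        + Real.sqrt (((μ.withDensity q').rnDeriv ν) x).toReal)]
  have hIl : Integrable (fun x => ((R.rnDeriv ν) x).toReal * F x) ν := by
    refine Integrable.mono' (Measure.integrable_toReal_rnDeriv (μ := R) (ν := ν))
      (((Measure.measurable_rnDeriv R ν).ennreal_toReal.mul hFmeas).aestronglyMeasurable)
      (ae_of_all _ fun x => ?_)
    rw [Real.norm_eq_abs, abs_mul, abs_of_nonneg ENNReal.toReal_nonneg,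
      abs_of_nonneg (hFbd x).1]
    calc ((R.rnDeriv ν) x).toReal * F x ≤ ((R.rnDeriv ν) x).toReal * 1 :=
          mul_le_mul_of_nonneg_left (hFbd x).2 ENNReal.toReal_nonneg
      _ = ((R.rnDeriv ν) x).toReal := mul_one _
  have hae : ∀ᵐ x ∂ν, ((R.rnDeriv ν) x).toReal * F x
      ≤ (2 * L + 1) ^ 2 / 2 * (G x + G' x) := by
    filter_upwards [hA, hB, Measure.rnDeriv_lt_top μ ν] with x eA eB ew
    have hP := pointwise_key hψb hanti hL hlip (q x) (q' x) (μ.rnDeriv ν x) (R.rnDeriv ν x)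
      (hqfin x) (hq'fin x) ew.ne
    simp only [hGdef, hG'def]
    rw [eA, eB]
    calc ((R.rnDeriv ν) x).toReal * F x = F x * ((R.rnDeriv ν) x).toReal := mul_comm _ _
      _ ≤ _ := by
          simp only [hFdef, ratio]
          exact hP
  have step1 : ∫ x, F x ∂(R) = ∫ x, ((R.rnDeriv ν) x).toReal * F x ∂ν := by
    rw [← MeasureTheory.integral_rnDeriv_smul hRν (f := F)]
    simp only [smul_eq_mul]
  rw [hell_eq R (μ.withDensity q) ν hRν hQν, hell_eq R (μ.withDensity q') ν hRν hQ'ν]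
  calc ∫ x, F x ∂(R) = ∫ x, ((R.rnDeriv ν) x).toReal * F x ∂ν := step1
    _ ≤ ∫ x, (2 * L + 1) ^ 2 / 2 * (G x + G' x) ∂ν := by
        refine integral_mono_ae hIl ?_ hae
        exact ((hGint.add hG'int).const_mul _)
    _ = (2 * L + 1) ^ 2 / 2 * (∫ x, G x ∂ν + ∫ x, G' x ∂ν) := by
        rw [MeasureTheory.integral_const_mul, integral_add hGint hG'int]
    _ = (2 * L + 1) ^ 2 * ((1 / 2) * ∫ x, G x ∂ν + (1 / 2) * ∫ x, G' x ∂ν) := by ring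
end

section
/- The class F_k of real-valued functions on an interval X ⊆ ℝ that are piecewise constant on some partition of X into at most k intervals (the partition may depend on the function) is VC-subgraph with VC-dimension at most 2k: no set of 2k+1 points in X×ℝ is shattered by the subgraphs {(x,u) : f(x) > u}, f ∈ F_k. -/
/-- `f` is piecewise constant on the set `X ⊆ ℝ` relative to some partition of
`X` into at most `k` intervals (the partition may depend on `f`). -/
def PiecewiseConstOn (X : Set ℝ) (k : ℕ) (f : ℝ → ℝ) : Prop :=
  ∃ P : Finset (Set ℝ), P.card ≤ k ∧ (∀ I ∈ P, I.OrdConnected) ∧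
    (∀ I ∈ P, ∀ J ∈ P, I ≠ J → Disjoint I J) ∧ (⋃ I ∈ P, I) = X ∧
    ∀ I ∈ P, ∃ c : ℝ, ∀ x ∈ I, f x = c

/-- The class of piecewise constant functions with at most `k` pieces is
VC-subgraph with dimension at most `2k`: no set of `2k+1` points of `X × ℝ` is
shattered by the subgraphs `{(x,u) : f x > u}`. -/
theorem stmt14 (k : ℕ) (hk : 0 < k) (X : Set ℝ) :
    ¬ ∃ S : Finset (ℝ × ℝ), S.card = 2 * k + 1 ∧ (∀ p ∈ S, p.1 ∈ X) ∧
      ∀ T ⊆ S, ∃ f : ℝ → ℝ, PiecewiseConstOn X k f ∧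
        {p : ℝ × ℝ | p ∈ S ∧ p.2 < f p.1} = (↑T : Set (ℝ × ℝ)) := by
  classical
  rintro ⟨S, hScard, hSX, hshat⟩
  -- Step 1: no two points of `S` share an x-coordinate.
  have key : ∀ p ∈ S, ∀ q ∈ S, p.1 = q.1 → p.2 < q.2 → False := by
    intro p hp q hq hx hu
    obtain ⟨f, -, heq⟩ := hshat {q} (by simpa using hq)
    have hqmem : q ∈ {r : ℝ × ℝ | r ∈ S ∧ r.2 < f r.1} := by
      rw [heq]; simp
    have hpmem : ¬ (p.2 < f p.1) := by
      intro h
      have hmem : p ∈ {r : ℝ × ℝ | r ∈ S ∧ r.2 < f r.1} := ⟨hp, h⟩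
      rw [heq] at hmem
      have : p = q := by simpa using hmem
      rw [this] at hu; exact lt_irrefl _ hu
    exact hpmem (by rw [hx]; exact hu.trans hqmem.2)
  have hinj : Set.InjOn Prod.fst (S : Set (ℝ × ℝ)) := by
    intro p hp q hq h
    by_contra hne
    have h2 : p.2 ≠ q.2 := fun h2 => hne (Prod.ext h h2)
    rcases lt_or_gt_of_ne h2 with hlt | hgt
    · exact key p hp q hq h hlt
    · exact key q hq p hp h.symm hgt
  set n := 2 * k + 1 with hn
  set Xs := S.image Prod.fst with hXs
  have hXcard : Xs.card = n := by
    rw [hXs, Finset.card_image_of_injOn hinj, hScard]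
  set e := Xs.orderIsoOfFin hXcard with he
  have hpex : ∀ i : Fin n, ∃ q ∈ S, q.1 = (e i : ℝ) := by
    intro i
    have hm : (e i : ℝ) ∈ Finset.image Prod.fst S := (e i).2
    obtain ⟨q, hq, hq'⟩ := Finset.mem_image.mp hm
    exact ⟨q, hq, hq'⟩
  choose p hpS hpx using hpex
  have hmono : ∀ i j : Fin n, i ≤ j → (p i).1 ≤ (p j).1 := by
    intro i j hij
    rw [hpx, hpx]
    exact_mod_cast e.monotone hij
  have hpinj : Function.Injective p := by
    intro i j hij
    have : (e i : ℝ) = e j := by rw [← hpx, ← hpx, hij]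
    exact e.injective (Subtype.coe_injective this)
  have h2j : ∀ j : Fin k, 2 * (j : ℕ) < n := fun j => by have := j.isLt; omega
  have h2j1 : ∀ j : Fin k, 2 * (j : ℕ) + 1 < n := fun j => by have := j.isLt; omega
  -- the selection: from each pair (2j, 2j+1) pick the point with larger second coord
  let sel : Fin k → Fin n := fun j =>
    if (p ⟨2 * j, h2j j⟩).2 ≥ (p ⟨2 * j + 1, h2j1 j⟩).2
      then ⟨2 * j, h2j j⟩ else ⟨2 * j + 1, h2j1 j⟩
  have hsel_or : ∀ j' : Fin k, (sel j' : ℕ) = 2 * j' ∨ (sel j' : ℕ) = 2 * j' + 1 := by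
    intro j'
    by_cases h : (p ⟨2 * j', h2j j'⟩).2 ≥ (p ⟨2 * j' + 1, h2j1 j'⟩).2
    · left; simp only [sel, if_pos h]
    · right; simp only [sel, if_neg h]
  set T : Finset (ℝ × ℝ) := Finset.image (fun j => p (sel j)) Finset.univ with hT
  have hTS : T ⊆ S := by
    intro q hq
    rw [hT, Finset.mem_image] at hq
    obtain ⟨j, -, rfl⟩ := hq
    exact hpS _
  obtain ⟨f, ⟨P, hPcard, hPord, hPdisj, hPunion, hPconst⟩, heq⟩ := hshat T hTS
  have hBex : ∀ i : Fin n, ∃ I ∈ P, (p i).1 ∈ I := by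
    intro i
    have hx : (p i).1 ∈ X := hSX _ (hpS i)
    rw [← hPunion] at hx
    simpa using hx
  choose B hBP hBmem using hBex
  -- pigeonhole: some interval contains three of the sorted points
  have hpig : ∃ I ∈ P, 2 < (Finset.univ.filter fun i : Fin n => B i = I).card := by
    apply Finset.exists_lt_card_fiber_of_mul_lt_card_of_maps_to
    · intro i _; exact hBP i
    · rw [Finset.card_univ, Fintype.card_fin]
      omega
  obtain ⟨I, hI, hIcard⟩ := hpig
  set F := (Finset.univ.filter fun i : Fin n => B i = I).image Fin.val with hF
  have hFcard : 2 < F.card := by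
    rw [hF, Finset.card_image_of_injective _ Fin.val_injective]; exact hIcard
  have hFne : F.Nonempty := Finset.card_pos.mp (by omega)
  set m := F.min' hFne with hm
  set M := F.max' hFne with hM
  have hFmem : ∀ l ∈ F, ∃ hl : l < n, B ⟨l, hl⟩ = I := by
    intro l hl
    rw [hF, Finset.mem_image] at hl
    obtain ⟨i, hi, rfl⟩ := hl
    exact ⟨i.isLt, by simpa using (Finset.mem_filter.mp hi).2⟩
  obtain ⟨hmlt, hBm⟩ := hFmem m (F.min'_mem hFne)
  obtain ⟨hMlt, hBM⟩ := hFmem M (F.max'_mem hFne)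
  have hmM : m + 2 ≤ M := by
    have hsub : F ⊆ Finset.Icc m M := fun x hx =>
      Finset.mem_Icc.mpr ⟨F.min'_le x hx, F.le_max' x hx⟩
    have hcc := Finset.card_le_card hsub
    rw [Nat.card_Icc] at hcc
    omega
  -- convexity of the block of indices mapped into I
  have hconv : ∀ l (hl : l < n), m ≤ l → l ≤ M → B ⟨l, hl⟩ = I := by
    intro l hl hml hlM
    have hx1 : (p ⟨m, hmlt⟩).1 ≤ (p ⟨l, hl⟩).1 := hmono _ _ hml
    have hx2 : (p ⟨l, hl⟩).1 ≤ (p ⟨M, hMlt⟩).1 := hmono _ _ hlM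
    have hxI : (p ⟨l, hl⟩).1 ∈ I :=
      (hPord I hI).out (hBm ▸ hBmem _) (hBM ▸ hBmem _) ⟨hx1, hx2⟩
    by_contra hne
    exact Set.disjoint_left.mp (hPdisj _ (hBP _) _ hI hne) (hBmem _) hxI
  -- find a complete pair inside the block
  have hjex : ∃ j : Fin k, m ≤ 2 * (j : ℕ) ∧ 2 * (j : ℕ) + 1 ≤ M := by
    rcases Nat.even_or_odd m with ⟨t, ht⟩ | ⟨t, ht⟩
    · exact ⟨⟨t, by omega⟩, by simp; omega⟩
    · exact ⟨⟨t + 1, by omega⟩, by simp; omega⟩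
  obtain ⟨j, hjm, hjM⟩ := hjex
  set a : Fin n := ⟨2 * j, h2j j⟩ with ha
  set b : Fin n := ⟨2 * j + 1, h2j1 j⟩ with hb
  have hBa : B a = I := hconv _ _ hjm (by omega)
  have hBb : B b = I := hconv _ _ (by omega) hjM
  obtain ⟨c, hc⟩ := hPconst I hI
  have hfa : f (p a).1 = c := hc _ (hBa ▸ hBmem a)
  have hfb : f (p b).1 = c := hc _ (hBb ▸ hBmem b)
  have hmemT : ∀ i : Fin n, p i ∈ T → ∃ j', sel j' = i := by
    intro i hi
    rw [hT, Finset.mem_image] at hi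
    obtain ⟨j', -, hj'⟩ := hi
    exact ⟨j', hpinj hj'⟩
  have hinT : ∀ i : Fin n, p i ∈ T → (p i).2 < f (p i).1 := by
    intro i hi
    have : p i ∈ (↑T : Set (ℝ × ℝ)) := hi
    rw [← heq] at this
    exact this.2
  have hnotT : ∀ i : Fin n, p i ∉ T → ¬ (p i).2 < f (p i).1 := by
    intro i hi h
    have : p i ∈ (↑T : Set (ℝ × ℝ)) := by rw [← heq]; exact ⟨hpS i, h⟩
    exact hi this
  by_cases hcase : (p a).2 ≥ (p b).2
  · have hsa : sel j = a := if_pos hcase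
    have haT : p a ∈ T := by
      rw [hT]; exact Finset.mem_image.mpr ⟨j, Finset.mem_univ _, by rw [hsa]⟩
    have hbT : p b ∉ T := by
      intro hbT
      obtain ⟨j', hj'⟩ := hmemT b hbT
      have hval : (sel j' : ℕ) = 2 * (j : ℕ) + 1 := by rw [hj']
      rcases hsel_or j' with h1 | h1
      · omega
      · have : j' = j := Fin.ext (by omega)
        rw [this, hsa] at hj'
        have : (a : ℕ) = (b : ℕ) := by rw [hj']
        simp [ha, hb] at this
    have h1 := hinT a haT
    have h2 := hnotT b hbT
    rw [hfa] at h1; rw [hfb] at h2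
    push_neg at h2
    linarith
  · have hsb : sel j = b := if_neg hcase
    have hbT : p b ∈ T := by
      rw [hT]; exact Finset.mem_image.mpr ⟨j, Finset.mem_univ _, by rw [hsb]⟩
    have haT : p a ∉ T := by
      intro haT
      obtain ⟨j', hj'⟩ := hmemT a haT
      have hval : (sel j' : ℕ) = 2 * (j : ℕ) := by rw [hj']
      rcases hsel_or j' with h1 | h1
      · have : j' = j := Fin.ext (by omega)
        rw [this, hsb] at hj'
        have : (b : ℕ) = (a : ℕ) := by rw [hj']
        simp [ha, hb] at this
      · omega
    have h1 := hinT b hbT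
    have h2 := hnotT a haT
    rw [hfb] at h1; rw [hfa] at h2
    push_neg at h2
    push_neg at hcase
    linarith
end

section
/- Let X₁,…,X_n be independent random variables and let T(X,q,q') = Σᵢ ψ(√(q'ᵢ(Xᵢ)/qᵢ(Xᵢ))) where ψ : [0,∞] → [−1,1] satisfies ∫ψ(√(q'ᵢ/qᵢ))dPᵢ ≤ a₀h²(Pᵢ,Qᵢ) − a₁h²(Pᵢ,Q'ᵢ) and ψ(1/x) = −ψ(x). Then a₁𝐡²(P,Q) − a₀𝐡²(P,Q') ≤ E[T(X,q,q')] ≤ a₀𝐡²(P,Q) − a₁𝐡²(P,Q'), where 𝐡²(P,Q) = Σᵢ h²(Pᵢ,Qᵢ). -/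
open MeasureTheory
open scoped ENNReal

lemma map_eval_pi' {n : ℕ} {α : Fin n → Type*} [∀ i, MeasurableSpace (α i)]
    (P : ∀ i, Measure (α i)) [∀ i, IsProbabilityMeasure (P i)] (i : Fin n) :
    (Measure.pi P).map (fun x => x i) = P i := by
  ext s hs
  rw [Measure.map_apply (measurable_pi_apply i) hs]
  have h : (fun x : ∀ j, α j => x i) ⁻¹' s
      = Set.pi Set.univ (Function.update (fun j => (Set.univ : Set (α j))) i s) := by
    ext x
    simp only [Set.mem_preimage, Set.mem_pi, Set.mem_univ, true_implies]
    constructor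
    · intro hx j
      rcases eq_or_ne j i with rfl | hj
      · simpa using hx
      · simp [Function.update_of_ne hj]
    · intro hx
      have := hx i
      simpa using this
  rw [h, Measure.pi_pi]
  rw [Finset.prod_eq_single i]
  · simp
  · intro j _ hj
    simp [Function.update_of_ne hj]
  · simp

lemma ratio_inv {β : Type*} (q q' : β → ℝ≥0∞) (hqfin : ∀ x, q x ≠ ⊤)
    (hq'fin : ∀ x, q' x ≠ ⊤) (x : β) : ratio q' q x = (ratio q q' x)⁻¹ := by
  unfold ratio
  rcases eq_or_ne (q x) 0 with hq0 | hq0 <;> rcases eq_or_ne (q' x) 0 with hq'0 | hq'0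
  · simp [hq0, hq'0]
  · simp [hq0, hq'0, ENNReal.div_zero, ENNReal.div_eq_top]
  · simp [hq0, hq'0, ENNReal.div_zero, ENNReal.inv_eq_top, ENNReal.div_eq_zero_iff, hqfin x]
  · simp only [hq0, hq'0, false_and, if_false, and_false]
    rw [ENNReal.inv_div (Or.inl (hqfin x)) (Or.inl hq0)]

lemma psi_ratio_neg {β : Type*} (q q' : β → ℝ≥0∞) (hqfin : ∀ x, q x ≠ ⊤)
    (hq'fin : ∀ x, q' x ≠ ⊤) (ψ : ℝ≥0∞ → ℝ)
    (hanti : ∀ x : ℝ≥0∞, x ≠ ⊤ → ψ x⁻¹ = -ψ x) (x : β) :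
    ψ ((ratio q' q x) ^ (1 / 2 : ℝ)) = -ψ ((ratio q q' x) ^ (1 / 2 : ℝ)) := by
  rw [ratio_inv q q' hqfin hq'fin x]
  rcases eq_or_ne (ratio q q' x) ⊤ with h | h
  · rw [h]
    rw [ENNReal.top_rpow_of_pos (by norm_num), ENNReal.inv_top,
      ENNReal.zero_rpow_of_pos (by norm_num)]
    have := hanti 0 (by simp)
    rw [ENNReal.inv_zero] at this
    rw [this]; ring
  · rw [ENNReal.inv_rpow]
    exact hanti _ (ENNReal.rpow_ne_top_of_nonneg (by norm_num) h)

lemma ratio_rpow_meas {β : Type*} [MeasurableSpace β] (q q' : β → ℝ≥0∞) (hq : Measurable q)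
    (hq' : Measurable q') : Measurable (fun x => (ratio q q' x) ^ (1/2 : ℝ)) := by
  apply Measurable.pow_const
  unfold ratio
  exact Measurable.ite ((hq (measurableSet_singleton 0)).inter
    (hq' (measurableSet_singleton 0))) measurable_const (hq'.div hq)

theorem stmt16 (n : ℕ) (α : Fin n → Type*) [∀ i, MeasurableSpace (α i)]
    (P : ∀ i, Measure (α i)) [∀ i, IsProbabilityMeasure (P i)]
    (μ : ∀ i, Measure (α i)) [∀ i, SigmaFinite (μ i)]
    (q q' : ∀ i, α i → ℝ≥0∞)
    (hq : ∀ i, Measurable (q i)) (hq' : ∀ i, Measurable (q' i))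
    (hqfin : ∀ i x, q i x ≠ ⊤) (hq'fin : ∀ i x, q' i x ≠ ⊤)
    [∀ i, IsProbabilityMeasure ((μ i).withDensity (q i))]
    [∀ i, IsProbabilityMeasure ((μ i).withDensity (q' i))]
    (ψ : ℝ≥0∞ → ℝ) (hψm : Measurable ψ) (hψb : ∀ x, |ψ x| ≤ 1)
    (hanti : ∀ x : ℝ≥0∞, x ≠ ⊤ → ψ x⁻¹ = -ψ x)
    (a₀ a₁ : ℝ) (ha₀ : 1 ≤ a₀) (ha₁ : 0 < a₁) (ha₁' : a₁ ≤ 1)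
    (hesp : ∀ i, ∫ x, ψ ((ratio (q i) (q' i) x) ^ (1 / 2 : ℝ)) ∂(P i)
        ≤ a₀ * hellingerSq (P i) ((μ i).withDensity (q i))
          - a₁ * hellingerSq (P i) ((μ i).withDensity (q' i)))
    (hesp' : ∀ i, ∫ x, ψ ((ratio (q' i) (q i) x) ^ (1 / 2 : ℝ)) ∂(P i)
        ≤ a₀ * hellingerSq (P i) ((μ i).withDensity (q' i))
          - a₁ * hellingerSq (P i) ((μ i).withDensity (q i))) :
    a₁ * (∑ i, hellingerSq (P i) ((μ i).withDensity (q i)))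
        - a₀ * (∑ i, hellingerSq (P i) ((μ i).withDensity (q' i)))
      ≤ ∫ x, (∑ i, ψ ((ratio (q i) (q' i) (x i)) ^ (1 / 2 : ℝ))) ∂(Measure.pi P) ∧
    ∫ x, (∑ i, ψ ((ratio (q i) (q' i) (x i)) ^ (1 / 2 : ℝ))) ∂(Measure.pi P)
      ≤ a₀ * (∑ i, hellingerSq (P i) ((μ i).withDensity (q i)))
        - a₁ * (∑ i, hellingerSq (P i) ((μ i).withDensity (q' i))) := by
  set f : ∀ i, α i → ℝ := fun i x => ψ ((ratio (q i) (q' i) x) ^ (1 / 2 : ℝ)) with hf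
  have hfm : ∀ i, Measurable (f i) :=
    fun i => hψm.comp (ratio_rpow_meas (q i) (q' i) (hq i) (hq' i))
  have hint : ∀ i, Integrable (fun x : ∀ j, α j => f i (x i)) (Measure.pi P) := by
    intro i
    refine Integrable.mono' (integrable_const 1)
      ((hfm i).comp (measurable_pi_apply i)).aestronglyMeasurable
      (ae_of_all _ fun x => ?_)
    rw [Real.norm_eq_abs]; exact hψb _
  have key : ∫ x, (∑ i, f i (x i)) ∂(Measure.pi P) = ∑ i, ∫ y, f i y ∂(P i) := by
    rw [integral_finset_sum _ fun i _ => hint i]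
    congr 1
    ext i
    rw [← map_eval_pi' P i,
      integral_map (measurable_pi_apply i).aemeasurable (hfm i).aestronglyMeasurable]
  have hneg : ∀ i, ∫ x, ψ ((ratio (q' i) (q i) x) ^ (1 / 2 : ℝ)) ∂(P i)
      = -∫ y, f i y ∂(P i) := by
    intro i
    rw [← integral_neg]
    congr 1
    ext x
    exact psi_ratio_neg (q i) (q' i) (hqfin i) (hq'fin i) ψ hanti x
  have hlow : ∀ i, a₁ * hellingerSq (P i) ((μ i).withDensity (q i))
      - a₀ * hellingerSq (P i) ((μ i).withDensity (q' i)) ≤ ∫ y, f i y ∂(P i) := by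
    intro i
    have := hesp' i
    rw [hneg i] at this
    linarith
  constructor
  · rw [key]
    calc a₁ * (∑ i, hellingerSq (P i) ((μ i).withDensity (q i)))
        - a₀ * (∑ i, hellingerSq (P i) ((μ i).withDensity (q' i)))
        = ∑ i, (a₁ * hellingerSq (P i) ((μ i).withDensity (q i))
          - a₀ * hellingerSq (P i) ((μ i).withDensity (q' i))) := by
          rw [Finset.sum_sub_distrib, Finset.mul_sum, Finset.mul_sum]
      _ ≤ ∑ i, ∫ y, f i y ∂(P i) := Finset.sum_le_sum fun i _ => hlow i
  · rw [key]
    calc ∑ i, ∫ y, f i y ∂(P i)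
        ≤ ∑ i, (a₀ * hellingerSq (P i) ((μ i).withDensity (q i))
          - a₁ * hellingerSq (P i) ((μ i).withDensity (q' i))) :=
          Finset.sum_le_sum fun i _ => hesp i
      _ = _ := by rw [Finset.sum_sub_distrib, Finset.mul_sum, Finset.mul_sum]
end

section
/- Let C ⊂ ℝ^N be a nonempty compact convex set and t : C×C → ℝ a continuous function such that β ↦ t(α,β) is strictly concave for each α and t(α,β) = −t(β,α) for all α, β. Then t has a unique saddle point, which lies on the diagonal: there exists a unique α* ∈ C with t(α*,β) ≤ t(α*,α*) = 0 ≤ t(α,α*) for all α, β ∈ C. -/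
open Finset in
/-- Push weights on an index type forward along a map. -/
theorem push_weights {ι κ : Type} [Fintype ι] [DecidableEq ι] [Fintype κ]
    (w' : κ → ℝ) (g : κ → ι) (h0 : ∀ i, 0 ≤ w' i) :
    ∃ w : ι → ℝ, (∀ j, 0 ≤ w j) ∧ ∑ j, w j = ∑ i, w' i ∧
      ∀ F : ι → ℝ, ∑ j, w j * F j = ∑ i, w' i * F (g i) := by
  classical
  refine ⟨fun j => ∑ i ∈ Finset.univ.filter (fun i => g i = j), w' i,
    fun j => Finset.sum_nonneg fun i _ => h0 i,
    Finset.sum_fiberwise Finset.univ g w', ?_⟩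
  intro F
  rw [← Finset.sum_fiberwise (Finset.univ) g (fun i => w' i * F (g i))]
  refine Finset.sum_congr rfl fun j _ => ?_
  rw [Finset.sum_mul]
  refine Finset.sum_congr rfl fun i hi => ?_
  rw [Finset.mem_filter] at hi
  rw [hi.2]

open Finset in
/-- An antisymmetric matrix game has a strategy guaranteeing payoff ≤ 0. -/
theorem antisym_game_value {ι : Type} [Fintype ι] [Nonempty ι] [DecidableEq ι]
    (M : ι → ι → ℝ) (hM : ∀ i j, M i j = -M j i) :
    ∃ w : ι → ℝ, (∀ i, 0 ≤ w i) ∧ ∑ i, w i = 1 ∧ ∀ i, ∑ j, w j * M j i ≤ 0 := by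
  classical
  set K : Set (ι → ℝ) := convexHull ℝ (Set.range M) with hK
  -- Step 1: there is a point of K in the nonpositive orthant
  have hex : ∃ x ∈ K, ∀ i, x i ≤ 0 := by
    by_contra h
    push_neg at h
    -- separate K from the nonpositive orthant O
    set O : Set (ι → ℝ) := {x | ∀ i, x i ≤ 0} with hO
    have hdisj : Disjoint K O := by
      rw [Set.disjoint_left]
      rintro x hxK hxO
      obtain ⟨i, hi⟩ := h x hxK
      exact absurd (hxO i) (not_le.2 hi)
    have hKc : Convex ℝ K := convex_convexHull ℝ _
    have hKcomp : IsCompact K := (Set.finite_range M).isCompact_convexHull ℝ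
    have hOc : Convex ℝ O := by
      intro x hx y hy a b ha hb hab
      intro i
      have := add_nonpos (mul_nonpos_of_nonneg_of_nonpos ha (hx i))
        (mul_nonpos_of_nonneg_of_nonpos hb (hy i))
      simpa using this
    have hOcl : IsClosed O := by
      have : O = ⋂ i, {x : ι → ℝ | x i ≤ 0} := by
        ext x; simp [hO, Set.mem_iInter]
      rw [this]
      exact isClosed_iInter fun i => isClosed_le (continuous_apply i) continuous_const
    obtain ⟨f, u, v, hfu, huv, hvf⟩ :=
      geometric_hahn_banach_compact_closed hKc hKcomp hOc hOcl hdisj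
    -- v < 0 since 0 ∈ O
    have h0O : (0 : ι → ℝ) ∈ O := fun i => le_refl 0
    have hv0 : v < 0 := by simpa using hvf 0 h0O
    -- f of the basis vectors is ≤ 0
    have hfe : ∀ i, f (Pi.single i 1) ≤ 0 := by
      intro i
      by_contra hpos
      push_neg at hpos
      have hc : (0:ℝ) ≤ -v / f (Pi.single i 1) := by
        apply div_nonneg _ hpos.le
        linarith
      have hmem : (-v / f (Pi.single i 1)) • (-(Pi.single i (1:ℝ)) : ι → ℝ) ∈ O := by
        intro j
        by_cases hji : j = i
        · subst hji
          simp only [Pi.smul_apply, Pi.neg_apply, Pi.single_eq_same, smul_eq_mul]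
          nlinarith
        · simp [Pi.single_eq_of_ne hji]
      have := hvf _ hmem
      have hne : f (Pi.single i 1) ≠ 0 := ne_of_gt hpos
      rw [map_smul, map_neg, smul_eq_mul, mul_neg] at this
      have h' : -v / f (Pi.single i 1) * f (Pi.single i 1) = -v :=
        div_mul_cancel₀ _ hne
      rw [h', neg_neg] at this
      exact lt_irrefl _ this
    -- expand f as a sum
    have hfx : ∀ x : ι → ℝ, f x = ∑ i, x i * f (Pi.single i 1) := by
      intro x
      conv_lhs => rw [pi_eq_sum_univ x]
      rw [map_sum]
      refine Finset.sum_congr rfl fun i _ => ?_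
      rw [map_smul, smul_eq_mul]
      congr 2
      ext j
      simp [Pi.single_apply, eq_comm]
    set y : ι → ℝ := fun i => -f (Pi.single i 1) with hy
    have hy0 : ∀ i, 0 ≤ y i := fun i => by simpa [hy] using neg_nonneg.2 (hfe i)
    have hrow : ∀ j, 0 < ∑ i, M j i * y i := by
      intro j
      have h1 : f (M j) < u := hfu (M j) (subset_convexHull ℝ _ ⟨j, rfl⟩)
      have h2 : f (M j) < 0 := lt_trans h1 (lt_trans huv hv0)
      rw [hfx] at h2
      have : ∑ i, M j i * y i = -∑ i, M j i * f (Pi.single i 1) := by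
        rw [← Finset.sum_neg_distrib]
        exact Finset.sum_congr rfl fun i _ => by simp only [hy]; ring
      rw [this]
      linarith
    set S : ℝ := ∑ i, y i with hS
    have hSpos : 0 < S := by
      rcases lt_or_eq_of_le (Finset.sum_nonneg fun i _ => hy0 i) with h | h
      · exact h
      · exfalso
        have hall : ∀ i, y i = 0 := by
          intro i
          have := (Finset.sum_eq_zero_iff_of_nonneg fun i _ => hy0 i).1 h.symm
          exact this i (Finset.mem_univ i)
        obtain ⟨j⟩ := ‹Nonempty ι›
        have := hrow j
        simp [hall] at this
    set μ : ι → ℝ := fun i => y i / S with hμ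
    have hμ0 : ∀ i, 0 ≤ μ i := fun i => div_nonneg (hy0 i) hSpos.le
    have hμrow : ∀ j, 0 < ∑ i, M j i * μ i := by
      intro j
      have : ∑ i, M j i * μ i = (∑ i, M j i * y i) / S := by
        rw [Finset.sum_div]
        exact Finset.sum_congr rfl fun i _ => by rw [hμ]; ring
      rw [this]
      exact div_pos (hrow j) hSpos
    have hμsum : ∑ i, μ i = 1 := by
      rw [hμ]
      simp only [← Finset.sum_div]
      exact div_self (ne_of_gt hSpos)
    -- quadratic form of antisymmetric matrix vanishes, contradiction
    set Q : ℝ := ∑ j, ∑ i, μ j * μ i * M j i with hQ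
    have hQpos : 0 < Q := by
      obtain ⟨j₀, hj₀⟩ : ∃ j₀, 0 < μ j₀ := by
        by_contra hno
        push_neg at hno
        have : ∀ i, μ i = 0 := fun i => le_antisymm (hno i) (hμ0 i)
        simp [this] at hμsum
      have hterm : ∀ j, 0 ≤ ∑ i, μ j * μ i * M j i := by
        intro j
        have : ∑ i, μ j * μ i * M j i = μ j * ∑ i, M j i * μ i := by
          rw [Finset.mul_sum]
          exact Finset.sum_congr rfl fun i _ => by ring
        rw [this]
        exact mul_nonneg (hμ0 j) (hμrow j).le
      have hj₀term : 0 < ∑ i, μ j₀ * μ i * M j₀ i := by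
        have : ∑ i, μ j₀ * μ i * M j₀ i = μ j₀ * ∑ i, M j₀ i * μ i := by
          rw [Finset.mul_sum]
          exact Finset.sum_congr rfl fun i _ => by ring
        rw [this]
        exact mul_pos hj₀ (hμrow j₀)
      calc (0:ℝ) < ∑ i, μ j₀ * μ i * M j₀ i := hj₀term
        _ ≤ Q := Finset.single_le_sum (fun j _ => hterm j) (Finset.mem_univ j₀)
    have hQzero : Q = -Q := by
      calc Q = ∑ j, ∑ i, -(μ j * μ i * M i j) := by
              refine Finset.sum_congr rfl fun j _ => Finset.sum_congr rfl fun i _ => ?_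
              rw [hM j i]; ring
        _ = -∑ j, ∑ i, μ j * μ i * M i j := by
              simp [Finset.sum_neg_distrib]
        _ = -∑ i, ∑ j, μ j * μ i * M i j := by rw [Finset.sum_comm]
        _ = -Q := by
              rw [hQ]
              congr 1
              exact Finset.sum_congr rfl fun i _ => Finset.sum_congr rfl fun j _ => by ring
    linarith
  -- Step 2: extract the weights
  obtain ⟨x, hxK, hxle⟩ := hex
  rw [hK, mem_convexHull_iff_exists_fintype] at hxK
  obtain ⟨κ, hκ, w', z, hw'0, hw'1, hz, hxz⟩ := hxK
  choose g hg using hz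
  obtain ⟨w, hw0, hwsum, hwF⟩ := @push_weights ι κ _ _ hκ w' g hw'0
  refine ⟨w, hw0, by rw [hwsum]; exact hw'1, ?_⟩
  intro k
  have hx : x k = ∑ i, w' i * M (g i) k := by
    rw [← hxz]
    simp only [Finset.sum_apply, Pi.smul_apply, smul_eq_mul]
    exact Finset.sum_congr rfl fun i _ => by rw [hg i]
  rw [hwF (fun j => M j k), ← hx]
  exact hxle k

theorem stmt17 (N : ℕ) (C : Set (Fin N → ℝ)) (hne : C.Nonempty)
    (hcomp : IsCompact C) (hconv : Convex ℝ C)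
    (t : (Fin N → ℝ) → (Fin N → ℝ) → ℝ)
    (hcont : Continuous fun p : (Fin N → ℝ) × (Fin N → ℝ) => t p.1 p.2)
    (hconc : ∀ a ∈ C, StrictConcaveOn ℝ C (t a))
    (hanti : ∀ a ∈ C, ∀ b ∈ C, t a b = -t b a) :
    ∃ astar ∈ C, (∀ b ∈ C, t astar b ≤ 0) ∧ t astar astar = 0 ∧
      (∀ a ∈ C, 0 ≤ t a astar) ∧
      ∀ a' b' : Fin N → ℝ, a' ∈ C → b' ∈ C →
        (∀ b ∈ C, t a' b ≤ t a' b') → (∀ a ∈ C, t a' b' ≤ t a b') →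
        a' = astar ∧ b' = astar := by
  classical
  have hself : ∀ a ∈ C, t a a = 0 := by
    intro a ha
    have := hanti a ha a ha
    linarith
  -- Existence of α* with t α* b ≤ 0 for all b ∈ C, via finite intersection property
  have hexist : ∃ a ∈ C, ∀ b ∈ C, t a b ≤ 0 := by
    set Z : C → Set (Fin N → ℝ) := fun b => {a | 0 ≤ t (↑b) a} with hZ
    have hZclosed : ∀ b : C, IsClosed (Z b) := by
      intro b
      have hc : Continuous fun a => t (↑b) a :=
        hcont.comp (continuous_const.prodMk continuous_id)
      exact isClosed_le continuous_const hc
    have hnonempty : (C ∩ ⋂ b : C, Z b).Nonempty := by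
      by_contra hempty
      rw [Set.not_nonempty_iff_eq_empty] at hempty
      obtain ⟨u, hu⟩ := hcomp.elim_finite_subfamily_closed Z hZclosed hempty
      -- the finite subfamily must have nonempty intersection with C
      rcases u.eq_empty_or_nonempty with rfl | hune
      · simp only [Finset.notMem_empty, Set.iInter_of_empty, Set.iInter_false,
          Set.iInter_univ, Set.inter_univ] at hu
        exact hne.ne_empty hu
      · have : Nonempty {i // i ∈ u} := ⟨⟨hune.choose, hune.choose_spec⟩⟩
        set M : {i // i ∈ u} → {i // i ∈ u} → ℝ := fun j i => t j.1.1 i.1.1 with hM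
        have hMa : ∀ i j, M i j = -M j i := fun i j =>
          hanti i.1.1 i.1.2 j.1.1 j.1.2
        obtain ⟨w, hw0, hw1, hwle⟩ := antisym_game_value M hMa
        set a : Fin N → ℝ := ∑ j, w j • (j.1.1 : Fin N → ℝ) with ha
        have haC : a ∈ C := hconv.sum_mem (fun j _ => hw0 j) hw1 (fun j _ => j.1.2)
        have hkey : ∀ i : {i // i ∈ u}, t a i.1.1 ≤ 0 := by
          intro i
          have hconc' : ConcaveOn ℝ C (t i.1.1) := (hconc _ i.1.2).concaveOn
          have hjensen : ∑ j, w j • t i.1.1 j.1.1 ≤ t i.1.1 a :=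
            hconc'.le_map_sum (fun j _ => hw0 j) hw1 (fun j _ => j.1.2)
          have h1 : t a i.1.1 = -t i.1.1 a := hanti a haC i.1.1 i.1.2
          have h2 : ∑ j, w j * M j i ≤ 0 := hwle i
          have h3 : ∑ j, w j • t i.1.1 j.1.1 = -∑ j, w j * M j i := by
            rw [← Finset.sum_neg_distrib]
            refine Finset.sum_congr rfl fun j _ => ?_
            rw [smul_eq_mul, hM]
            rw [hanti i.1.1 i.1.2 j.1.1 j.1.2]
            ring
          rw [h1]
          rw [h3] at hjensen
          linarith
        have hmem : a ∈ C ∩ ⋂ b ∈ u, Z b := by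
          refine ⟨haC, ?_⟩
          simp only [Set.mem_iInter]
          intro b hb
          have := hkey ⟨b, hb⟩
          have h := hanti b.1 b.2 a haC
          simp only [hZ, Set.mem_setOf_eq]
          linarith
        rw [hu] at hmem
        exact hmem
    obtain ⟨a, haC, haZ⟩ := hnonempty
    refine ⟨a, haC, fun b hb => ?_⟩
    rw [Set.mem_iInter] at haZ
    have := haZ ⟨b, hb⟩
    have h := hanti a haC b hb
    simp only [hZ, Set.mem_setOf_eq] at this
    linarith
  obtain ⟨astar, hastarC, hastar⟩ := hexist
  -- the strict concavity midpoint argument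
  have hmid : ∀ a ∈ C, ∀ x ∈ C, ∀ y ∈ C, x ≠ y →
      (1/2 : ℝ) * t a x + (1/2 : ℝ) * t a y < t a ((1/2 : ℝ) • x + (1/2 : ℝ) • y) := by
    intro a ha x hx y hy hxy
    have := (hconc a ha).2 hx hy hxy (by norm_num : (0:ℝ) < 1/2)
      (by norm_num : (0:ℝ) < 1/2) (by norm_num)
    simpa [smul_eq_mul] using this
  refine ⟨astar, hastarC, hastar, hself astar hastarC, ?_, ?_⟩
  · intro a ha
    have := hanti a ha astar hastarC
    have h2 := hastar a ha
    linarith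
  · intro a' b' ha' hb' hmax hmin
    have hab0 : t a' b' = 0 := by
      have h1 := hmax a' ha'
      have h2 := hmin b' hb'
      rw [hself a' ha'] at h1
      rw [hself b' hb'] at h2
      linarith
    have hab : a' = b' := by
      by_contra hne'
      have hmC : (1/2 : ℝ) • a' + (1/2 : ℝ) • b' ∈ C :=
        hconv ha' hb' (by norm_num) (by norm_num) (by norm_num)
      have hlt := hmid a' ha' a' ha' b' hb' hne'
      rw [hself a' ha', hab0] at hlt
      have hle := hmax _ hmC
      rw [hab0] at hle
      linarith
    subst hab
    have ha'star : a' = astar := by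
      by_contra hne'
      have h1 : t astar a' ≤ 0 := hastar a' ha'
      have h2 : t a' astar ≤ 0 := by
        have := hmax astar hastarC
        rw [hab0] at this
        exact this
      have h3 : t a' astar = -t astar a' := hanti a' ha' astar hastarC
      have h4 : t astar a' = 0 := by linarith
      have hmC : (1/2 : ℝ) • astar + (1/2 : ℝ) • a' ∈ C :=
        hconv hastarC ha' (by norm_num) (by norm_num) (by norm_num)
      have hlt := hmid astar hastarC astar hastarC a' ha' (fun h => hne' h.symm)
      rw [hself astar hastarC, h4] at hlt
      have hle := hastar _ hmC
      linarith
    exact ⟨ha'star, ha'star⟩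
end
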